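/- Lower direction of the guaranteed-distortion identity: for any kernel P_{Y|X} with P(d(X,Y) ≤ d) = 1 and induced marginal P_Y, I(X;Y) = E_X[D(P_{Y|X}‖P_Y)] ≥ E[-log P_Y(B_d(X))] ≥ R_X⁺(d,0). Hence R_X⁺(d,0) ≤ R_X(d,0). -/

import Mathlib

noncomputable section

/-- `q` is a probability mass function on the finite alphabet `α`. -/
def isPMF {α : Type*} [Fintype α] (q : α → ℝ) : Prop :=
  (∀ a, 0 ≤ q a) ∧ ∑ a, q a = 1

/-- Shannon entropy (in bits) of a pmf on a finite alphabet. -/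
def ent {α : Type*} [Fintype α] (q : α → ℝ) : ℝ :=
  ∑ a, -(q a * Real.logb 2 (q a))

/-- Relative entropy (Kullback–Leibler divergence, in bits) between pmfs. -/
def klDiv {α : Type*} [Fintype α] (μ ν : α → ℝ) : ℝ :=
  ∑ a, μ a * Real.logb 2 (μ a / ν a)

/-- Probability, under `Q`, of the distortion-`D` ball around `x`:
`Q(B_D(x)) = Q {y : df x y ≤ D}`. -/
def probBall {X Y : Type*} [Fintype Y] (Q : Y → ℝ) (df : X → Y → ℝ) (D : ℝ) (x : X) : ℝ :=
  ∑ y, if df x y ≤ D then Q y else 0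

/-- Output marginal `P_Y` induced by input pmf `p` and kernel `K`. -/
def marg {X Y : Type*} [Fintype X] [Fintype Y] (p : X → ℝ) (K : X → Y → ℝ) : Y → ℝ :=
  fun y => ∑ x, p x * K x y

/-- Mutual information (in bits) `I(X;Y)` of the joint law `p ⊗ K`,
written as `E_X [ D(K(X) ‖ P_Y) ]`. -/
def mutInfo {X Y : Type*} [Fintype X] [Fintype Y] (p : X → ℝ) (K : X → Y → ℝ) : ℝ :=
  ∑ x, p x * klDiv (K x) (marg p K)

/-- Binary relative entropy `d(α‖q)` (in bits). -/
def bdiv (a q : ℝ) : ℝ :=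
  a * Real.logb 2 (a / q) + (1 - a) * Real.logb 2 ((1 - a) / (1 - q))

/-- Log-sum / data-processing style key inequality: if `μ` is a pmf supported
on `S` and absolutely continuous w.r.t. `ν ≥ 0`, then `D(μ‖ν) ≥ -log₂ ν(S)`. -/
private lemma kl_key {Y : Type*} [Fintype Y] (μ ν : Y → ℝ) (S : Finset Y)
    (hμ0 : ∀ y, 0 ≤ μ y) (hμ1 : ∑ y, μ y = 1) (hν0 : ∀ y, 0 ≤ ν y)
    (hsupp : ∀ y, μ y ≠ 0 → y ∈ S) (habs : ∀ y, 0 < μ y → 0 < ν y) :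
    - Real.logb 2 (∑ y ∈ S, ν y) ≤ ∑ y, μ y * Real.logb 2 (μ y / ν y) := by
  set t : ℝ := ∑ y ∈ S, ν y with ht_def
  obtain ⟨y₀, -, hy₀⟩ := Finset.exists_ne_zero_of_sum_ne_zero
    (by simp [hμ1] : ∑ y, μ y ≠ 0)
  have hy₀pos : 0 < μ y₀ := lt_of_le_of_ne (hμ0 y₀) (Ne.symm hy₀)
  have ht : 0 < t := lt_of_lt_of_le (habs y₀ hy₀pos)
    (Finset.single_le_sum (fun y _ => hν0 y) (hsupp y₀ hy₀))
  set S' : Finset Y := Finset.univ.filter (fun y => 0 < μ y) with hS'_def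
  have hmemS' : ∀ y ∈ S', 0 < μ y := by intro y hy; simpa [hS'_def] using hy
  have hS'sub : S' ⊆ S := fun y hy => hsupp y (ne_of_gt (hmemS' y hy))
  have hzero : ∀ y ∈ Finset.univ, y ∉ S' → μ y = 0 := by
    intro y _ hy
    by_contra h
    exact hy (by simp [hS'_def, lt_of_le_of_ne (hμ0 y) (Ne.symm h)])
  have hsum_eq : ∑ y, μ y * Real.logb 2 (μ y / ν y)
      = ∑ y ∈ S', μ y * Real.logb 2 (μ y / ν y) :=
    (Finset.sum_subset (Finset.subset_univ _)
      (fun y hy h => by rw [hzero y hy h, zero_mul])).symm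
  have hμS' : ∑ y ∈ S', μ y = 1 := by
    rw [← hμ1]
    exact Finset.sum_subset (Finset.subset_univ _) hzero
  rw [hsum_eq]
  have hlog2 : (0:ℝ) < Real.log 2 := Real.log_pos one_lt_two
  -- reduce to natural logarithm
  have main : - Real.log t ≤ ∑ y ∈ S', μ y * Real.log (μ y / ν y) := by
    have key : ∀ y ∈ S', μ y * Real.log (ν y / (μ y * t)) ≤ ν y / t - μ y := by
      intro y hy
      have hμy : 0 < μ y := hmemS' y hy
      have hνy : 0 < ν y := habs y hμy
      have hpos : 0 < ν y / (μ y * t) := by positivity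
      have hlog := Real.log_le_sub_one_of_pos hpos
      have h1 : μ y * Real.log (ν y / (μ y * t)) ≤ μ y * (ν y / (μ y * t) - 1) :=
        mul_le_mul_of_nonneg_left hlog (le_of_lt hμy)
      have h2 : μ y * (ν y / (μ y * t) - 1) = ν y / t - μ y := by
        field_simp
      linarith
    have expand : ∀ y ∈ S', μ y * Real.log (ν y / (μ y * t))
        = -(μ y * Real.log (μ y / ν y) + μ y * Real.log t) := by
      intro y hy
      have hμy : 0 < μ y := hmemS' y hy
      have hνy : 0 < ν y := habs y hμy
      rw [Real.log_div (ne_of_gt hνy) (by positivity),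
        Real.log_div (ne_of_gt hμy) (ne_of_gt hνy),
        Real.log_mul (ne_of_gt hμy) (ne_of_gt ht)]
      ring
    have hsum : ∑ y ∈ S', μ y * Real.log (ν y / (μ y * t)) ≤ 0 := by
      have h3 : ∑ y ∈ S', μ y * Real.log (ν y / (μ y * t))
          ≤ ∑ y ∈ S', (ν y / t - μ y) := Finset.sum_le_sum key
      have h4 : ∑ y ∈ S', (ν y / t - μ y) = (∑ y ∈ S', ν y) / t - 1 := by
        rw [Finset.sum_sub_distrib, hμS', Finset.sum_div]
      have h5 : (∑ y ∈ S', ν y) ≤ t :=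
        Finset.sum_le_sum_of_subset_of_nonneg hS'sub (fun y _ _ => hν0 y)
      have h6 : (∑ y ∈ S', ν y) / t ≤ 1 := by
        rw [div_le_one ht]; exact h5
      linarith
    have h7 : ∑ y ∈ S', μ y * Real.log (ν y / (μ y * t))
        = -(∑ y ∈ S', μ y * Real.log (μ y / ν y) + Real.log t) := by
      rw [Finset.sum_congr rfl expand, Finset.sum_neg_distrib, Finset.sum_add_distrib,
        ← Finset.sum_mul, hμS', one_mul]
    rw [h7] at hsum
    linarith
  have hL : (∑ y ∈ S', μ y * Real.logb 2 (μ y / ν y))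
      = (∑ y ∈ S', μ y * Real.log (μ y / ν y)) / Real.log 2 := by
    rw [Finset.sum_div]
    refine Finset.sum_congr rfl fun y _ => ?_
    rw [Real.logb, mul_div_assoc]
  rw [hL, Real.logb, ← neg_div, div_le_div_iff_of_pos_right hlog2]
  exact main

/-- The induced marginal of a feasible kernel is a pmf, gives positive ball
probabilities, and the associated expected log-loss lower-bounds `I(X;Y)`. -/
private lemma marg_props {X Y : Type*} [Fintype X] [Fintype Y]
    (p : X → ℝ) (df : X → Y → ℝ) (D : ℝ) (hp : isPMF p)
    (K : X → Y → ℝ) (hK : ∀ x, isPMF (K x))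
    (hfeas : ∀ x, 0 < p x → ∀ y, ¬ df x y ≤ D → K x y = 0) :
    isPMF (marg p K) ∧ (∀ x, 0 < p x → 0 < probBall (marg p K) df D x) ∧
    (∑ x, p x * (- Real.logb 2 (probBall (marg p K) df D x))) ≤ mutInfo p K := by
  have hmarg0 : ∀ y, 0 ≤ marg p K y := fun y =>
    Finset.sum_nonneg fun x _ => mul_nonneg (hp.1 x) ((hK x).1 y)
  have hmarg_pmf : isPMF (marg p K) := by
    refine ⟨hmarg0, ?_⟩
    unfold marg
    rw [Finset.sum_comm]
    calc ∑ x, ∑ y, p x * K x y = ∑ x : X, p x * 1 := by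
          refine Finset.sum_congr rfl fun x _ => ?_
          rw [← Finset.mul_sum, (hK x).2]
      _ = 1 := by simp [hp.2]
  have hmarg_ge : ∀ x y, p x * K x y ≤ marg p K y := fun x y =>
    Finset.single_le_sum (f := fun x' => p x' * K x' y)
      (fun x' _ => mul_nonneg (hp.1 x') ((hK x').1 y)) (Finset.mem_univ x)
  have hpos : ∀ x, 0 < p x → 0 < probBall (marg p K) df D x := by
    intro x hx
    obtain ⟨y₁, -, hy₁⟩ := Finset.exists_ne_zero_of_sum_ne_zero
      (by simp [(hK x).2] : ∑ y, K x y ≠ 0)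
    have hKy₁ : 0 < K x y₁ := lt_of_le_of_ne ((hK x).1 y₁) (Ne.symm hy₁)
    have hdf : df x y₁ ≤ D := by
      by_contra h
      exact hy₁ (hfeas x hx y₁ h)
    have h1 : 0 < marg p K y₁ := lt_of_lt_of_le (by positivity) (hmarg_ge x y₁)
    have h2 : (if df x y₁ ≤ D then marg p K y₁ else 0)
        ≤ ∑ y, if df x y ≤ D then marg p K y else 0 :=
      Finset.single_le_sum
        (f := fun y => if df x y ≤ D then marg p K y else 0)
        (fun y _ => by split; exacts [hmarg0 y, le_rfl]) (Finset.mem_univ y₁)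
    rw [if_pos hdf] at h2
    unfold probBall
    exact lt_of_lt_of_le h1 h2
  refine ⟨hmarg_pmf, hpos, ?_⟩
  unfold mutInfo
  refine Finset.sum_le_sum fun x _ => ?_
  rcases eq_or_lt_of_le (hp.1 x) with h | h
  · rw [← h, zero_mul, zero_mul]
  · refine mul_le_mul_of_nonneg_left ?_ (le_of_lt h)
    have hball : probBall (marg p K) df D x
        = ∑ y ∈ Finset.univ.filter (fun y => df x y ≤ D), marg p K y := by
      rw [Finset.sum_filter]; rfl
    rw [hball]
    exact kl_key (K x) (marg p K) _ (hK x).1 (hK x).2 hmarg0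
      (fun y hy => Finset.mem_filter.mpr ⟨Finset.mem_univ y, by
        by_contra hd; exact hy (hfeas x h y hd)⟩)
      (fun y hy => lt_of_lt_of_le (by positivity) (hmarg_ge x y))

/-- converse direction of the guaranteed-distortion identity.
For any feasible kernel `K` (i.e. `P(d(X,Y) ≤ D) = 1`) with induced marginal
`P_Y = marg p K`, `I(X;Y) = E_X[D(K(X)‖P_Y)] ≥ E[-log₂ P_Y(B_D(X))] ≥ R_X⁺(d,0)`;
hence `R_X⁺(d,0) ≤ R_X(d,0)`. -/
theorem guaranteed_converse {X Y : Type*} [Fintype X] [Fintype Y] [Nonempty Y]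
    (p : X → ℝ) (df : X → Y → ℝ) (D : ℝ) (hp : isPMF p)
    (K : X → Y → ℝ) (hK : ∀ x, isPMF (K x))
    (hfeas : ∀ x, 0 < p x → ∀ y, ¬ df x y ≤ D → K x y = 0) :
    (∑ x, p x * (- Real.logb 2 (probBall (marg p K) df D x))) ≤ mutInfo p K ∧
    sInf {r : ℝ | ∃ Q : Y → ℝ, isPMF Q ∧ (∀ x, 0 < p x → 0 < probBall Q df D x) ∧
        r = ∑ x, p x * (- Real.logb 2 (probBall Q df D x))} ≤
      ∑ x, p x * (- Real.logb 2 (probBall (marg p K) df D x)) ∧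
    sInf {r : ℝ | ∃ Q : Y → ℝ, isPMF Q ∧ (∀ x, 0 < p x → 0 < probBall Q df D x) ∧
        r = ∑ x, p x * (- Real.logb 2 (probBall Q df D x))} ≤
      sInf {r : ℝ | ∃ K' : X → Y → ℝ, (∀ x, isPMF (K' x)) ∧
        (∀ x, 0 < p x → ∀ y, ¬ df x y ≤ D → K' x y = 0) ∧ r = mutInfo p K'} := by
  obtain ⟨hpmf, hpos, hineq⟩ := marg_props p df D hp K hK hfeas
  have hbdd : BddBelow {r : ℝ | ∃ Q : Y → ℝ, isPMF Q ∧
      (∀ x, 0 < p x → 0 < probBall Q df D x) ∧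
      r = ∑ x, p x * (- Real.logb 2 (probBall Q df D x))} := by
    refine ⟨0, fun r hr => ?_⟩
    obtain ⟨Q, hQ, hQpos, rfl⟩ := hr
    refine Finset.sum_nonneg fun x _ => ?_
    rcases eq_or_lt_of_le (hp.1 x) with h | h
    · rw [← h, zero_mul]
    · refine mul_nonneg (le_of_lt h) ?_
      rw [neg_nonneg]
      refine Real.logb_nonpos one_lt_two (le_of_lt (hQpos x h)) ?_
      calc probBall Q df D x ≤ ∑ y, Q y := by
            unfold probBall
            refine Finset.sum_le_sum fun y _ => ?_
            split
            · exact le_rfl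
            · exact hQ.1 y
        _ = 1 := hQ.2
  refine ⟨hineq, csInf_le hbdd ⟨marg p K, hpmf, hpos, rfl⟩, ?_⟩
  refine le_csInf ⟨mutInfo p K, K, hK, hfeas, rfl⟩ ?_
  rintro b ⟨K', hK', hfeas', rfl⟩
  obtain ⟨hpmf', hpos', hineq'⟩ := marg_props p df D hp K' hK' hfeas'
  exact le_trans (csInf_le hbdd ⟨marg p K', hpmf', hpos', rfl⟩) hineq'
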